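/- Let G be a connected graph on [n] that has the interval property with respect to its labeling, let H = in_lex(G), and let ℓ be the length of the longest induced path of G. Then indmatch(H) ≥ ℓ. -/

import Mathlib

open SimpleGraph

/-- `G` has the interval property with respect to its labeling: for every edge `{i,j}`
with `i < j`, every pair `{k,l}` with `i ≤ k < l ≤ j` is an edge of `G`. -/
def HasIntervalProperty {n : ℕ} (G : SimpleGraph (Fin n)) : Prop :=
  ∀ i j k l : Fin n, G.Adj i j → i < j → i ≤ k → k < l → l ≤ j → G.Adj k l

/-- The bipartite graph `in_lex(G)` on `{x_1,…,x_n} ∪ {y_1,…,y_n}` (here `Sum.inl i = x_i`,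
`Sum.inr j = y_j`) whose edges are the pairs `{x_i, y_j}` with `i < j` and `{i,j} ∈ E(G)`. -/
def inLex {n : ℕ} (G : SimpleGraph (Fin n)) : SimpleGraph (Fin n ⊕ Fin n) :=
  SimpleGraph.fromRel (fun u v =>
    ∃ i j : Fin n, i < j ∧ G.Adj i j ∧ u = Sum.inl i ∧ v = Sum.inr j)

/-- `M` is an induced matching of `H`: a set of edges of `H`, pairwise vertex-disjoint,
such that no edge of `H` joins two vertices lying in distinct edges of `M`. -/
def IsInducedMatching {V : Type*} (H : SimpleGraph V) (M : Set (Sym2 V)) : Prop :=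
  M ⊆ H.edgeSet ∧
  (∀ e ∈ M, ∀ f ∈ M, e ≠ f → ∀ v, v ∈ e → v ∉ f) ∧
  (∀ e ∈ M, ∀ f ∈ M, e ≠ f → ∀ u ∈ e, ∀ v ∈ f, ¬ H.Adj u v)

/-- An indexed family of `m` pairwise distinct edges forming an induced matching of `H`. -/
def IsInducedMatchingFamily {V : Type*} (H : SimpleGraph V) {m : ℕ} (f : Fin m → Sym2 V) : Prop :=
  Function.Injective f ∧ IsInducedMatching H (Set.range f)

/-- `p` is an induced path of length `l` in `G`: `l+1` distinct vertices such that the edges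
of `G` among them are exactly the consecutive pairs. -/
def IsInducedPath {V : Type*} (G : SimpleGraph V) (l : ℕ) (p : Fin (l + 1) → V) : Prop :=
  Function.Injective p ∧
  ∀ a b : Fin (l + 1), G.Adj (p a) (p b) ↔ ((a : ℕ) + 1 = b ∨ (b : ℕ) + 1 = a)

/-- `c` is an induced cycle of length `k` in `H`: `k` distinct vertices such that the edges
of `H` among them are exactly the consecutive pairs (cyclically). -/
def IsInducedCycle {V : Type*} (H : SimpleGraph V) (k : ℕ) (c : Fin k → V) : Prop :=
  3 ≤ k ∧ Function.Injective c ∧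
  ∀ a b : Fin k, H.Adj (c a) (c b) ↔ (((a : ℕ) + 1) % k = b ∨ ((b : ℕ) + 1) % k = a)

/-- Condition (∗) for an induced matching `{x_{i t}, y_{j t}}` of `in_lex(G)`: for every
index `a` and vertex `t < i a` with `{t, j a} ∈ E(G)`, replacing `x_{i a}` by `x_t`
does not yield an induced matching of `in_lex(G)`. -/
def CondStar {n m : ℕ} (G : SimpleGraph (Fin n)) (i j : Fin m → Fin n) : Prop :=
  ∀ a : Fin m, ∀ t : Fin n, t < i a → G.Adj t (j a) →
    ¬ IsInducedMatchingFamily (inLex G)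
        (fun u => if u = a then s(Sum.inl t, Sum.inr (j u))
                  else s(Sum.inl (i u), Sum.inr (j u)))

/-- If `G` is connected with the interval property, `ℓ` is the length of the longest
induced path of `G` and `m = indmatch(in_lex(G))`, then `m ≥ ℓ`. -/
lemma inLex_adj_lr {n : ℕ} (G : SimpleGraph (Fin n)) (a b : Fin n) :
    (inLex G).Adj (Sum.inl a) (Sum.inr b) ↔ a < b ∧ G.Adj a b := by
  constructor
  · rintro h
    rw [inLex, fromRel_adj] at h
    rcases h.2 with ⟨i, j, h1, h2, h3, h4⟩ | ⟨i, j, h1, h2, h3, h4⟩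
    · cases Sum.inl.inj h3; cases Sum.inr.inj h4; exact ⟨h1, h2⟩
    · exact absurd h3 (by simp)
  · rintro ⟨h1, h2⟩
    rw [inLex, fromRel_adj]
    exact ⟨by simp, Or.inl ⟨a, b, h1, h2, rfl, rfl⟩⟩

lemma inLex_not_ll {n : ℕ} (G : SimpleGraph (Fin n)) (a b : Fin n) :
    ¬ (inLex G).Adj (Sum.inl a) (Sum.inl b) := by
  rw [inLex, fromRel_adj]
  rintro ⟨-, ⟨i, j, -, -, -, h⟩ | ⟨i, j, -, -, -, h⟩⟩ <;> simp at h

lemma inLex_not_rr {n : ℕ} (G : SimpleGraph (Fin n)) (a b : Fin n) :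
    ¬ (inLex G).Adj (Sum.inr a) (Sum.inr b) := by
  rw [inLex, fromRel_adj]
  rintro ⟨-, ⟨i, j, -, -, h, -⟩ | ⟨i, j, -, -, h, -⟩⟩ <;> simp at h

lemma dir_eq {n : ℕ} {G : SimpleGraph (Fin n)} (hG : HasIntervalProperty G)
    {x y z : Fin n} (hxy : G.Adj x y) (hyz : G.Adj y z) (hxz : ¬ G.Adj x z)
    (hne : x ≠ z) : (x < y ↔ y < z) := by
  constructor
  · intro h
    by_contra hc
    have hzy : z < y := lt_of_le_of_ne (not_lt.mp hc) hyz.ne'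
    rcases lt_or_gt_of_ne hne with h2 | h2
    · exact hxz (hG x y x z hxy h le_rfl h2 hzy.le)
    · exact hxz ((hG z y z x hyz.symm hzy le_rfl h2 h.le)).symm
  · intro h
    by_contra hc
    have hyx : y < x := lt_of_le_of_ne (not_lt.mp hc) hxy.ne'
    rcases lt_or_gt_of_ne hne with h2 | h2
    · exact hxz (hG y z x z hyz h hyx.le h2 le_rfl)
    · exact hxz ((hG y x z x hxy.symm hyx h.le h2 le_rfl)).symm

lemma inducedPath_rev {n ℓ : ℕ} {G : SimpleGraph (Fin n)} {p : Fin (ℓ + 1) → Fin n}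
    (hp : IsInducedPath G ℓ p) : IsInducedPath G ℓ (p ∘ Fin.rev) := by
  refine ⟨hp.1.comp Fin.rev_injective, fun a b => ?_⟩
  show G.Adj (p a.rev) (p b.rev) ↔ _
  rw [hp.2]
  have ha : (a.rev : ℕ) = ℓ - a := by simp [Fin.val_rev]
  have hb : (b.rev : ℕ) = ℓ - b := by simp [Fin.val_rev]
  rw [ha, hb]
  have := a.isLt; have := b.isLt
  omega

lemma path_dir {n ℓ : ℕ} {G : SimpleGraph (Fin n)} (hG : HasIntervalProperty G)
    {p : Fin (ℓ + 1) → Fin n} (hp : IsInducedPath G ℓ p)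
    (t : ℕ) (ht : t + 2 ≤ ℓ) :
    (p ⟨t, by omega⟩ < p ⟨t + 1, by omega⟩ ↔ p ⟨t + 1, by omega⟩ < p ⟨t + 2, by omega⟩) := by
  have h1 : G.Adj (p ⟨t, by omega⟩) (p ⟨t + 1, by omega⟩) := (hp.2 _ _).mpr (by left; rfl)
  have h2 : G.Adj (p ⟨t + 1, by omega⟩) (p ⟨t + 2, by omega⟩) := (hp.2 _ _).mpr (by left; rfl)
  have h3 : ¬ G.Adj (p ⟨t, by omega⟩) (p ⟨t + 2, by omega⟩) := by
    rw [hp.2]; simp; omega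
  have h4 : p ⟨t, by omega⟩ ≠ p ⟨t + 2, by omega⟩ := by
    intro h; have := hp.1 h; simp [Fin.ext_iff] at this
  exact dir_eq hG h1 h2 h3 h4

lemma path_steps_mono {n ℓ : ℕ} {G : SimpleGraph (Fin n)} (hG : HasIntervalProperty G)
    {p : Fin (ℓ + 1) → Fin n} (hp : IsInducedPath G ℓ p) (hℓ : 1 ≤ ℓ)
    (h01 : p ⟨0, by omega⟩ < p ⟨1, by omega⟩) :
    ∀ t : ℕ, ∀ ht : t + 1 ≤ ℓ, p ⟨t, by omega⟩ < p ⟨t + 1, by omega⟩ := by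
  intro t
  induction t with
  | zero => intro ht; exact h01
  | succ s ih => intro ht; exact (path_dir hG hp s (by omega)).mp (ih (by omega))

lemma path_steps_anti {n ℓ : ℕ} {G : SimpleGraph (Fin n)} (hG : HasIntervalProperty G)
    {p : Fin (ℓ + 1) → Fin n} (hp : IsInducedPath G ℓ p) (hℓ : 1 ≤ ℓ)
    (h01 : p ⟨1, by omega⟩ < p ⟨0, by omega⟩) :
    ∀ t : ℕ, ∀ ht : t + 1 ≤ ℓ, p ⟨t + 1, by omega⟩ < p ⟨t, by omega⟩ := by
  intro t
  induction t with
  | zero => intro ht; exact h01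
  | succ s ih =>
    intro ht
    have hd := path_dir hG hp s (by omega)
    have hni : ¬ p ⟨s + 1, by omega⟩ < p ⟨s + 2, by omega⟩ :=
      fun h => absurd (ih (by omega)) (asymm (hd.mpr h))
    have hne : p ⟨s + 2, by omega⟩ ≠ p ⟨s + 1, by omega⟩ := by
      intro h; have := hp.1 h; simp [Fin.ext_iff] at this
    exact lt_of_le_of_ne (not_lt.mp hni) hne

lemma exists_mono_path {n ℓ : ℕ} {G : SimpleGraph (Fin n)} (hG : HasIntervalProperty G)
    {p : Fin (ℓ + 1) → Fin n} (hp : IsInducedPath G ℓ p) (hℓ : 1 ≤ ℓ) :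
    ∃ q : Fin (ℓ + 1) → Fin n, IsInducedPath G ℓ q ∧
      ∀ t : ℕ, ∀ ht : t + 1 ≤ ℓ, q ⟨t, by omega⟩ < q ⟨t + 1, by omega⟩ := by
  have hne : p ⟨0, by omega⟩ ≠ p ⟨1, by omega⟩ := by
    intro h; have := hp.1 h; simp [Fin.ext_iff] at this
  rcases lt_or_gt_of_ne hne with h | h
  · exact ⟨p, hp, path_steps_mono hG hp hℓ h⟩
  · refine ⟨p ∘ Fin.rev, inducedPath_rev hp, fun t ht => ?_⟩
    show p (Fin.rev ⟨t, by omega⟩) < p (Fin.rev ⟨t + 1, by omega⟩)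
    have h1 : Fin.rev (⟨t, by omega⟩ : Fin (ℓ + 1)) = ⟨(ℓ - t - 1) + 1, by omega⟩ := by
      apply Fin.ext; simp [Fin.val_rev]; omega
    have h2 : Fin.rev (⟨t + 1, by omega⟩ : Fin (ℓ + 1)) = ⟨ℓ - t - 1, by omega⟩ := by
      apply Fin.ext; simp [Fin.val_rev]; omega
    rw [h1, h2]
    exact path_steps_anti hG hp hℓ h (ℓ - t - 1) (by omega)

lemma steps_to_mono {n ℓ : ℕ} {q : Fin (ℓ + 1) → Fin n}
    (hstep : ∀ t : ℕ, ∀ ht : t + 1 ≤ ℓ, q ⟨t, by omega⟩ < q ⟨t + 1, by omega⟩) :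
    ∀ a b : Fin (ℓ + 1), (a : ℕ) < (b : ℕ) → q a < q b := by
  have key : ∀ k t : ℕ, ∀ h : t + k + 1 ≤ ℓ, q ⟨t, by omega⟩ < q ⟨t + k + 1, by omega⟩ := by
    intro k
    induction k with
    | zero => intro t h; exact hstep t h
    | succ s ih =>
      intro t h
      exact lt_trans (ih t (by omega)) (by
        have := hstep (t + s + 1) (by omega)
        have e : (⟨t + (s + 1) + 1, by omega⟩ : Fin (ℓ + 1)) = ⟨t + s + 1 + 1, by omega⟩ :=
          Fin.ext (by simp only []; omega)
        rw [e]; exact this)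
  intro a b hab
  have hb := b.isLt
  have := key ((b : ℕ) - a - 1) a (by omega)
  have e1 : (⟨(a : ℕ), by omega⟩ : Fin (ℓ + 1)) = a := by simp [Fin.ext_iff]
  have e2 : (⟨(a : ℕ) + ((b : ℕ) - a - 1) + 1, by omega⟩ : Fin (ℓ + 1)) = b := by
    simp [Fin.ext_iff]; omega
  rwa [e1, e2] at this

theorem stmt_6 {n : ℕ} (G : SimpleGraph (Fin n)) (hconn : G.Connected)
    (hG : HasIntervalProperty G) (ℓ m : ℕ)
    (hℓ : IsGreatest {l : ℕ | ∃ p : Fin (l + 1) → Fin n, IsInducedPath G l p} ℓ)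
    (hm : IsGreatest {k : ℕ | ∃ M : Set (Sym2 (Fin n ⊕ Fin n)),
            IsInducedMatching (inLex G) M ∧ M.ncard = k} m) :
    ℓ ≤ m := by
  rcases Nat.eq_zero_or_pos ℓ with h0 | hpos
  · omega
  obtain ⟨p, hp⟩ := hℓ.1
  obtain ⟨q, hq, hstep⟩ := exists_mono_path hG hp hpos
  have mono := steps_to_mono hstep
  have A : ∀ (a b : ℕ) (ha : a < ℓ + 1) (hb : b < ℓ + 1),
      G.Adj (q ⟨a, ha⟩) (q ⟨b, hb⟩) ↔ (a + 1 = b ∨ b + 1 = a) := fun a b ha hb =>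
    hq.2 ⟨a, ha⟩ ⟨b, hb⟩
  set f : Fin ℓ → Sym2 (Fin n ⊕ Fin n) :=
    fun t => s(Sum.inl (q ⟨(t : ℕ), by omega⟩), Sum.inr (q ⟨(t : ℕ) + 1, by omega⟩)) with hf
  have hlt : ∀ t : Fin ℓ, q ⟨(t : ℕ), by omega⟩ < q ⟨(t : ℕ) + 1, by omega⟩ :=
    fun t => hstep t.val t.isLt
  have hadj : ∀ t : Fin ℓ, G.Adj (q ⟨(t : ℕ), by omega⟩) (q ⟨(t : ℕ) + 1, by omega⟩) :=
    fun t => (A _ _ _ _).mpr (Or.inl rfl)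
  have hinj : Function.Injective f := by
    intro s t h
    rw [hf, Sym2.eq_iff] at h
    rcases h with ⟨h1, -⟩ | ⟨h1, -⟩
    · have := hq.1 (Sum.inl.inj h1)
      simp [Fin.ext_iff] at this ⊢
      omega
    · exact absurd h1 (by simp)
  -- distinct indices give disjoint vertex sets
  have hdisj : ∀ s t : Fin ℓ, s ≠ t → ∀ v, v ∈ f s → v ∉ f t := by
    intro s t hst v hvs hvt
    rw [hf, Sym2.mem_iff] at hvs hvt
    have hne : (s : ℕ) ≠ (t : ℕ) := fun h => hst (Fin.ext h)
    rcases hvs with rfl | rfl <;> rcases hvt with h | h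
    · have := hq.1 (Sum.inl.inj h); simp [Fin.ext_iff] at this; omega
    · exact absurd h (by simp)
    · exact absurd h (by simp)
    · have := hq.1 (Sum.inr.inj h); simp [Fin.ext_iff] at this; omega
  have hcross : ∀ s t : Fin ℓ, s ≠ t → ∀ u ∈ f s, ∀ v ∈ f t, ¬ (inLex G).Adj u v := by
    intro s t hst u hu v hv hadj2
    rw [hf, Sym2.mem_iff] at hu hv
    have hne : (s : ℕ) ≠ (t : ℕ) := fun h => hst (Fin.ext h)
    rcases hu with rfl | rfl <;> rcases hv with rfl | rfl
    · exact inLex_not_ll G _ _ hadj2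
    · obtain ⟨hlt2, hG2⟩ := (inLex_adj_lr G _ _).mp hadj2
      rcases (A _ _ _ _).mp hG2 with h | h
      · omega
      · exact absurd (mono ⟨(t : ℕ) + 1, by omega⟩ ⟨(s : ℕ), by omega⟩ (by simp; omega))
          (asymm hlt2)
    · obtain ⟨hlt2, hG2⟩ := (inLex_adj_lr G _ _).mp hadj2.symm
      rcases (A _ _ _ _).mp hG2 with h | h
      · omega
      · exact absurd (mono ⟨(s : ℕ) + 1, by omega⟩ ⟨(t : ℕ), by omega⟩ (by simp; omega))
          (asymm hlt2)
    · exact inLex_not_rr G _ _ hadj2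
  have hmatch : IsInducedMatching (inLex G) (Set.range f) := by
    refine ⟨?_, ?_, ?_⟩
    · rintro e ⟨t, rfl⟩
      rw [hf, SimpleGraph.mem_edgeSet, inLex_adj_lr]
      exact ⟨hlt t, hadj t⟩
    · rintro e ⟨s, rfl⟩ e' ⟨t, rfl⟩ hne v hv
      exact hdisj s t (fun h => hne (by rw [h])) v hv
    · rintro e ⟨s, rfl⟩ e' ⟨t, rfl⟩ hne u hu v hv
      exact hcross s t (fun h => hne (by rw [h])) u hu v hv
  have hcard : (Set.range f).ncard = ℓ := by
    rw [← Set.image_univ, ← Finset.coe_univ, ← Finset.coe_image, Set.ncard_coe_finset,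
      Finset.card_image_of_injective _ hinj, Finset.card_univ, Fintype.card_fin]
  exact hm.2 ⟨Set.range f, hmatch, hcard⟩
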